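/- Any convex Fréchet–Urysohn subset F of a topological vector space E has the property (α₄): for every point x ∈ F and every array (x_{m,n})_{m,n∈ℕ} of points of F with lim_n x_{m,n} = x for each m, there exist a strictly increasing sequence (m_k) of natural numbers and natural numbers (n_k) such that lim_k x_{m_k,n_k} = x. -/

import Mathlib

open Filter Topology Set

private lemma chainRec {R : ℕ → ℕ → Prop} (h : ∀ a, ∃ b, a < b ∧ R a b) :
    ∃ φ : ℕ → ℕ, StrictMono φ ∧ ∀ k, R (φ k) (φ (k + 1)) := by
  choose g hg1 hg2 using h
  refine ⟨fun k => g^[k + 1] 0, strictMono_nat_of_lt_succ fun k => ?_, fun k => ?_⟩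
  · rw [Function.iterate_succ_apply' g (k + 1) 0]
    exact hg1 _
  · show R (g^[k + 1] 0) (g^[k + 1 + 1] 0)
    rw [Function.iterate_succ_apply' g (k + 1) 0]
    exact hg2 _

private lemma chainRec' {Q : ℕ → Prop} (h : ∀ a, ∃ b, a < b ∧ Q b) :
    ∃ φ : ℕ → ℕ, StrictMono φ ∧ ∀ k, Q (φ k) := by
  obtain ⟨φ, h1, h2⟩ := chainRec (R := fun _ b => Q b) h
  exact ⟨fun k => φ (k + 1), fun a b hab => h1 (by omega), fun k => h2 k⟩

private lemma exists_subseq_strictMono {f : ℕ → ℕ} (hf : Tendsto f atTop atTop) :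
    ∃ φ : ℕ → ℕ, StrictMono φ ∧ StrictMono (f ∘ φ) := by
  have h : ∀ a, ∃ b, a < b ∧ f a < f b := by
    intro a
    obtain ⟨N, hN⟩ := (hf.eventually_gt_atTop (f a)).exists_forall_of_atTop
    exact ⟨max N (a + 1), lt_of_lt_of_le (Nat.lt_succ_self a) (le_max_right _ _),
      hN _ (le_max_left _ _)⟩
  obtain ⟨φ, h1, h2⟩ := chainRec h
  exact ⟨φ, h1, strictMono_nat_of_lt_succ h2⟩

private lemma specializes_inseparable {E : Type*} [AddCommGroup E] [TopologicalSpace E]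
    [IsTopologicalAddGroup E] {a b : E} (h : a ⤳ b) : Inseparable a b := by
  have h2 : b ⤳ a := by
    have := h.map (f := fun y => a + b - y) (continuous_const.sub continuous_id)
    simpa using this
  exact h.antisymm h2

private lemma tendsto_inseparable {α : Type*} {E : Type*} [AddCommGroup E] [TopologicalSpace E]
    [IsTopologicalAddGroup E] {l : Filter α} [l.NeBot] {f : α → E} {a b : E}
    (ha : Tendsto f l (𝓝 a)) (hb : Tendsto f l (𝓝 b)) : Inseparable a b := by
  have h0 : Tendsto (fun t => f t - f t) l (𝓝 (a - b)) := ha.sub hb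
  have h1 : Tendsto (fun _ : α => (0 : E)) l (𝓝 (a - b)) := by simpa using h0
  have h2 : pure (0 : E) ≤ 𝓝 (a - b) := by
    rwa [Filter.Tendsto, Filter.map_const] at h1
  have h3 : Inseparable (0 : E) (a - b) :=
    specializes_inseparable (specializes_iff_pure.mpr h2)
  have hc : Continuous fun y : E => y + b := continuous_id.add continuous_const
  have h4 : Inseparable ((0 : E) + b) (a - b + b) :=
    ((h3.specializes.map hc).antisymm (h3.specializes'.map hc))
  simpa using h4.symm

private lemma const_tendsto_inseparable {E : Type*} [AddCommGroup E] [TopologicalSpace E]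
    [IsTopologicalAddGroup E] {c x : E} (h : Tendsto (fun _ : ℕ => c) atTop (𝓝 x)) :
    Inseparable c x := by
  have h2 : pure c ≤ 𝓝 x := by rwa [Filter.Tendsto, Filter.map_const] at h
  exact specializes_inseparable (specializes_iff_pure.mpr h2)

/-- Proposition 4.6: any convex Fréchet–Urysohn subset `F` of a topological vector space has
property (α₄): any countable family of sequences in `F` converging to `x ∈ F` admits a
diagonal sequence, meeting infinitely many of them, which converges to `x`. -/
theorem convex_frechetUrysohn_alpha4
    {E : Type*} [AddCommGroup E] [Module ℝ E] [TopologicalSpace E]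
    [IsTopologicalAddGroup E] [ContinuousSMul ℝ E]
    (F : Set E) (hconv : Convex ℝ F)
    (hFU : ∀ A : Set E, A ⊆ F → ∀ x ∈ F, x ∈ closure A →
      ∃ u : ℕ → E, (∀ n, u n ∈ A) ∧ Tendsto u atTop (nhds x)) :
    ∀ x ∈ F, ∀ xs : ℕ → ℕ → E, (∀ m n, xs m n ∈ F) →
      (∀ m, Tendsto (xs m) atTop (nhds x)) →
      ∃ (mk nk : ℕ → ℕ), StrictMono mk ∧
        Tendsto (fun k => xs (mk k) (nk k)) atTop (nhds x) := by
  intro x hx xs hxsF hxs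
  by_cases hcase : ∀ M : ℕ, ∃ m, M < m ∧ ∃ n, Inseparable (xs m n) x
  · -- Case 1: points inseparable from x occur in arbitrarily high rows
    obtain ⟨mk, hmk, hQ⟩ := chainRec' hcase
    choose nk hnk using hQ
    refine ⟨mk, nk, hmk, ?_⟩
    rw [tendsto_nhds]
    intro U hU hxU
    refine Filter.Eventually.of_forall fun k => ?_
    exact ((hnk k).mem_open_iff hU).mpr hxU
  · -- Case 2
    push_neg at hcase
    obtain ⟨M₀, hM₀⟩ := hcase
    -- hM₀ : ∀ m, M₀ < m → ∀ n, ¬ Inseparable (xs m n) x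
    set z : ℕ → ℕ → E :=
      fun m n => ((1 : ℝ) / 2) • xs (M₀ + 1) m + ((1 : ℝ) / 2) • xs (M₀ + 2 + m) n with hz
    set e : ℕ → E := fun m => ((1 : ℝ) / 2) • xs (M₀ + 1) m + ((1 : ℝ) / 2) • x with he
    have hniA : ∀ k n, ¬ Inseparable (xs (M₀ + 1 + k) n) x := fun k n =>
      hM₀ (M₀ + 1 + k) (by omega) n
    have hzF : ∀ m n, z m n ∈ F := fun m n =>
      hconv (hxsF _ _) (hxsF _ _) (by norm_num) (by norm_num) (by norm_num)
    have hze : ∀ m, Tendsto (z m) atTop (𝓝 (e m)) := by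
      intro m
      have := ((hxs (M₀ + 2 + m)).const_smul ((1 : ℝ) / 2)).const_add
        (((1 : ℝ) / 2) • xs (M₀ + 1) m)
      simpa [hz, he] using this
    have hex : Tendsto e atTop (𝓝 x) := by
      have h1 := ((hxs (M₀ + 1)).const_smul ((1 : ℝ) / 2)).add_const (((1 : ℝ) / 2) • x)
      have h2 : ((1 : ℝ) / 2) • x + ((1 : ℝ) / 2) • x = x := by module
      rw [h2] at h1
      exact h1
    have hne : ∀ m, ¬ Inseparable (e m) x := by
      intro m h
      have hc : Continuous fun y : E => (2 : ℝ) • y - x :=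
        (continuous_id.const_smul (2 : ℝ)).sub continuous_const
      have h5 : Inseparable ((2 : ℝ) • e m - x) ((2 : ℝ) • x - x) :=
        (h.specializes.map hc).antisymm (h.specializes'.map hc)
      have e1 : (2 : ℝ) • e m - x = xs (M₀ + 1) m := by rw [he]; module
      have e2 : (2 : ℝ) • x - x = x := by module
      rw [e1, e2] at h5
      exact hniA 0 m (by simpa using h5)
    set A : Set E := {y | (∃ m n, y = z m n) ∧ ¬ Inseparable y x} with hA
    have hAF : A ⊆ F := by
      rintro y ⟨⟨m, n, rfl⟩, -⟩
      exact hzF m n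
    have hclA : x ∈ closure A := by
      rw [mem_closure_iff]
      intro U hU hxU
      have hev : ∀ᶠ m in atTop, e m ∈ U := hex (hU.mem_nhds hxU)
      obtain ⟨m, hem⟩ := hev.exists
      by_cases hgood : ∃ n, z m n ∈ U ∧ ¬ Inseparable (z m n) x
      · obtain ⟨n, h1, h2⟩ := hgood
        exact ⟨z m n, h1, ⟨m, n, rfl⟩, h2⟩
      · push_neg at hgood
        exfalso
        have hev2 : ∀ᶠ n in atTop, z m n ∈ U := (hze m) (hU.mem_nhds hem)
        obtain ⟨N, hN⟩ := hev2.exists_forall_of_atTop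
        have hT1 : Tendsto (fun j => z m (j + N)) atTop (𝓝 (e m)) :=
          (hze m).comp (tendsto_add_atTop_nat N)
        have hT2 : Tendsto (fun j => z m (j + N)) atTop (𝓝 x) := by
          rw [tendsto_nhds]
          intro V hV hxV
          refine Filter.Eventually.of_forall fun j => ?_
          have hmem : z m (j + N) ∈ U := hN _ (Nat.le_add_left N j)
          exact ((hgood _ hmem).mem_open_iff hV).mpr hxV
        exact hne m (tendsto_inseparable hT1 hT2)
    obtain ⟨u, huA, huT⟩ := hFU A hAF x hx hclA
    have hex2 : ∀ k, ∃ m n, u k = z m n := fun k => (huA k).1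
    have hni : ∀ k, ¬ Inseparable (u k) x := fun k => (huA k).2
    choose mu nu hu using hex2
    have hmono : Tendsto mu atTop atTop := by
      by_contra hcon
      rw [tendsto_atTop] at hcon
      push_neg at hcon
      obtain ⟨M, hM⟩ := hcon
      have hM' : ∃ᶠ k in atTop, mu k < M := hM.mono fun k hk => by omega
      have hinf : {k | mu k < M}.Infinite := Nat.frequently_atTop_iff_infinite.mp hM'
      have hfib : ∃ i, i < M ∧ {k | mu k = i}.Infinite := by
        by_contra hall
        push_neg at hall
        have hsub : {k | mu k < M} ⊆ ⋃ i ∈ Finset.range M, {k | mu k = i} := by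
          intro k hk
          exact Set.mem_biUnion (Finset.mem_range.mpr hk) rfl
        exact hinf (((Finset.range M).finite_toSet.biUnion
          (fun i hi => (hall i (Finset.mem_range.mp hi)))).subset hsub)
      obtain ⟨i, hiM, hfibi⟩ := hfib
      obtain ⟨ψ, hψ, hψi⟩ :=
        Filter.extraction_of_frequently_atTop (Nat.frequently_atTop_iff_infinite.mpr hfibi)
      have hv : Tendsto (fun j => u (ψ j)) atTop (𝓝 x) := huT.comp hψ.tendsto_atTop
      by_cases hq : ∃ n₀, {j | nu (ψ j) = n₀}.Infinite
      · obtain ⟨n₀, hn₀⟩ := hq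
        obtain ⟨θ, hθ, hθn⟩ :=
          Filter.extraction_of_frequently_atTop (Nat.frequently_atTop_iff_infinite.mpr hn₀)
        have hconst : Tendsto (fun i_ => u (ψ (θ i_))) atTop (𝓝 x) := hv.comp hθ.tendsto_atTop
        have hconst' : Tendsto (fun _ : ℕ => z i n₀) atTop (𝓝 x) := by
          have hfe : (fun i_ : ℕ => u (ψ (θ i_))) = fun _ : ℕ => z i n₀ := by
            funext i_
            rw [hu (ψ (θ i_)), hψi (θ i_), hθn i_]
          rwa [hfe] at hconst
        have hzins : Inseparable (z i n₀) x := const_tendsto_inseparable hconst'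
        apply hni (ψ (θ 0))
        rw [hu (ψ (θ 0)), hψi (θ 0), hθn 0]
        exact hzins
      · push_neg at hq
        have hqt : Tendsto (fun j => nu (ψ j)) atTop atTop := by
          rw [tendsto_atTop]
          intro b
          have hfin : {j | nu (ψ j) < b}.Finite := by
            have hsub : {j | nu (ψ j) < b} ⊆ ⋃ i' ∈ Finset.range b, {j | nu (ψ j) = i'} := by
              intro j hj
              exact Set.mem_biUnion (Finset.mem_range.mpr hj) rfl
            exact ((Finset.range b).finite_toSet.biUnion
              (fun i' _ => (hq i'))).subset hsub
          obtain ⟨a, ha⟩ := hfin.bddAbove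
          rw [eventually_atTop]
          refine ⟨a + 1, fun j hj => ?_⟩
          by_contra hlt
          have : j ∈ {j | nu (ψ j) < b} := by simpa using Nat.lt_of_not_le hlt
          have := ha this
          omega
        have hvz : Tendsto (fun j => z i (nu (ψ j))) atTop (𝓝 x) := by
          have hfe : (fun j : ℕ => u (ψ j)) = fun j : ℕ => z i (nu (ψ j)) := by
            funext j
            rw [hu (ψ j), hψi j]
          rwa [hfe] at hv
        exact hne i (tendsto_inseparable ((hze i).comp hqt) hvz)
    obtain ⟨φ, hφ, hφf⟩ := exists_subseq_strictMono hmono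
    refine ⟨fun j => M₀ + 2 + mu (φ j), fun j => nu (φ j), ?_, ?_⟩
    · intro a b hab
      have := hφf hab
      simp only [Function.comp] at this
      show M₀ + 2 + mu (φ a) < M₀ + 2 + mu (φ b)
      omega
    · have h1 : Tendsto (fun j => u (φ j)) atTop (𝓝 x) := huT.comp hφ.tendsto_atTop
      have h2 : Tendsto (fun j => xs (M₀ + 1) (mu (φ j))) atTop (𝓝 x) :=
        (hxs (M₀ + 1)).comp hφf.tendsto_atTop
      have h3 : Tendsto (fun j => (2 : ℝ) • u (φ j) - xs (M₀ + 1) (mu (φ j))) atTop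
          (𝓝 ((2 : ℝ) • x - x)) := (h1.const_smul (2 : ℝ)).sub h2
      have hxeq : (2 : ℝ) • x - x = x := by module
      rw [hxeq] at h3
      have hfe : (fun j => xs (M₀ + 2 + mu (φ j)) (nu (φ j))) =
          fun j => (2 : ℝ) • u (φ j) - xs (M₀ + 1) (mu (φ j)) := by
        funext j
        rw [hu (φ j), hz]
        module
      rwa [hfe]
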